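/- Let γ₁,…,γ_m be a complete set of representatives of the left cosets Γ_i = γ_i AΓA⁻¹ of AΓA⁻¹ in Γ, where m = |det A|. Then for row vectors {v_α} with v₀ ≠ 0, the condition y_{[s]}(γ_i) = A_{[s]} Σ_{γ∈Γ} y_{[s]}(γ) d_{AγA⁻¹γ_i⁻¹} for 0 ≤ s < p and i = 1,…,m is equivalent to the condition v_{[s]} = Σ_{γ∈Γ_i} Σ_{t=0}^{s} Q̃_{[s,t]}(γ⁻¹) A_{[t]} v_{[t]} d_{γ⁻¹} for 0 ≤ s < p and i = 1,…,m. -/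

import Mathlib

open scoped BigOperators
open Finset MeasureTheory

noncomputable section

/-- The vector `X_[s](x)` of all degree-`s` monomials of `x ∈ ℂ^d`, indexed by
multisets of size `s` over `Fin d` (i.e. `Sym (Fin d) s`). -/
def Xvec (d s : ℕ) (x : Fin d → ℂ) : Sym (Fin d) s → ℂ :=
  fun m => (Multiset.map x (m : Multiset (Fin d))).prod

/-- `X_[s]` applied to a real vector. -/
def XvecR (d s : ℕ) (x : Fin d → ℝ) : Sym (Fin d) s → ℂ :=
  Xvec d s fun i => (x i : ℂ)

/-- `Mt` is the matrix `M_[t]` induced by `M` on degree-`t` monomials, i.e.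
`X_[t](Mx) = M_[t] X_[t](x)` for all `x`. -/
def IsMonMat (d t : ℕ) (M : Matrix (Fin d) (Fin d) ℝ)
    (Mt : Matrix (Sym (Fin d) t) (Sym (Fin d) t) ℂ) : Prop :=
  ∀ x : Fin d → ℝ, XvecR d t (M.mulVec x) = Mt.mulVec (XvecR d t x)

/-- `Q` is the family of matrices `Q_[s,t](y)` defined by the expansion
`X_[s](x - y) = ∑_{t=0}^{s} Q_[s,t](y) X_[t](x)`. -/
def IsQfam (d : ℕ)
    (Q : (s : ℕ) → (t : ℕ) → (Fin d → ℝ) → Matrix (Sym (Fin d) s) (Sym (Fin d) t) ℂ) : Prop :=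
  ∀ (s : ℕ) (y x : Fin d → ℝ),
    XvecR d s (x - y) = ∑ t ∈ Finset.range (s + 1), (Q s t y).mulVec (XvecR d t x)

/-- A complex square matrix is expansive if all of its eigenvalues (roots of the
characteristic polynomial) have modulus strictly greater than `1`. -/
def ExpansiveC {n : Type*} [Fintype n] [DecidableEq n] (M : Matrix n n ℂ) : Prop :=
  ∀ μ : ℂ, M.charpoly.IsRoot μ → 1 < ‖μ‖

/-- A real square matrix is expansive if all of its complex eigenvalues have
modulus strictly greater than `1`. -/
def ExpansiveR {n : Type*} [Fintype n] [DecidableEq n] (M : Matrix n n ℝ) : Prop :=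
  ExpansiveC (M.map (algebraMap ℝ ℂ))

/-- Elements of a splitting crystal group `Γ = G ⋉ Λ`, written as pairs
`γ = (b, l)` with `b` a matrix (the point part) and `l` a vector. -/
abbrev CrystElem (d : ℕ) := Matrix (Fin d) (Fin d) ℝ × (Fin d → ℝ)

/-- The action `γ(x) = b(x + l)` of `γ = (b, l)`. -/
def crystAct {d : ℕ} (γ : CrystElem d) (x : Fin d → ℝ) : Fin d → ℝ :=
  γ.1.mulVec (x + γ.2)

/-- The product `(b₂,l₂)·(b₁,l₁) = (b₂b₁, l₁ + b₁⁻¹ l₂)` (composition of the actions). -/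
def crystMul {d : ℕ} (γ₂ γ₁ : CrystElem d) : CrystElem d :=
  (γ₂.1 * γ₁.1, γ₁.2 + (γ₁.1)⁻¹.mulVec γ₂.2)

/-- The inverse `(b,l)⁻¹ = (b⁻¹, -b l)`. -/
def crystInv {d : ℕ} (γ : CrystElem d) : CrystElem d :=
  ((γ.1)⁻¹, -(γ.1.mulVec γ.2))

/-- Conjugation by an invertible matrix `A`:
`A (b,l) A⁻¹ = (A b A⁻¹, (A b A⁻¹)⁻¹ (A b l))`. -/
def crystConj {d : ℕ} (A : Matrix (Fin d) (Fin d) ℝ) (γ : CrystElem d) : CrystElem d :=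
  (A * γ.1 * A⁻¹, (A * γ.1 * A⁻¹)⁻¹.mulVec ((A * γ.1).mulVec γ.2))

/-- `(G, Λ)` are the data of a splitting crystal group `Γ = G ⋉ Λ`: `G` is a
finite group of orthogonal matrices and `Λ` is a full-rank lattice preserved by `G`. -/
def IsSplittingCrystal (d : ℕ) (G : Finset (Matrix (Fin d) (Fin d) ℝ))
    (Λ : Set (Fin d → ℝ)) : Prop :=
  (1 : Matrix (Fin d) (Fin d) ℝ) ∈ G ∧
  (∀ b ∈ G, ∀ b' ∈ G, b * b' ∈ G) ∧
  (∀ b ∈ G, b⁻¹ ∈ G) ∧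
  (∀ b ∈ G, b * b.transpose = 1) ∧
  (∃ R : Matrix (Fin d) (Fin d) ℝ, IsUnit R.det ∧
      Λ = {v | ∃ k : Fin d → ℤ, v = R.mulVec fun i => (k i : ℝ)}) ∧
  (∀ b ∈ G, ∀ l ∈ Λ, b.mulVec l ∈ Λ)

/-- The underlying set of `Γ = G ⋉ Λ`. -/
def crystSet {d : ℕ} (G : Finset (Matrix (Fin d) (Fin d) ℝ)) (Λ : Set (Fin d → ℝ)) :
    Set (CrystElem d) := {γ | γ.1 ∈ G ∧ γ.2 ∈ Λ}

/-- `A` is a `Γ`-admissible matrix: expansive and `AΓA⁻¹ ⊆ Γ`. -/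
def IsAdmissible {d : ℕ} (G : Finset (Matrix (Fin d) (Fin d) ℝ)) (Λ : Set (Fin d → ℝ))
    (A : Matrix (Fin d) (Fin d) ℝ) : Prop :=
  ExpansiveR A ∧ ∀ γ ∈ crystSet G Λ, crystConj A γ ∈ crystSet G Λ

/-- The rows `v_α`, `|α| = t`, grouped into the `d_t × r` matrix `v_[t]`;
a multiset `m : Sym (Fin d) t` corresponds to the multi-index `α j = count j m`. -/
def vmat (d r : ℕ) (v : (Fin d → ℕ) → Fin r → ℂ) (t : ℕ) :
    Matrix (Sym (Fin d) t) (Fin r) ℂ :=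
  Matrix.of fun m i => v (fun j => Multiset.count j (m : Multiset (Fin d))) i

/-- `y_[s](γ) = ∑_{t=0}^{s} Q̃_[s,t](γ) v_[t]`, where `Q̃_[s,t]((b,l)) = Q_[s,t](l) b_[t]⁻¹`. -/
def yMat (d r : ℕ)
    (Q : (s : ℕ) → (t : ℕ) → (Fin d → ℝ) → Matrix (Sym (Fin d) s) (Sym (Fin d) t) ℂ)
    (Bm : Matrix (Fin d) (Fin d) ℝ → (t : ℕ) → Matrix (Sym (Fin d) t) (Sym (Fin d) t) ℂ)
    (v : (Fin d → ℕ) → Fin r → ℂ) (s : ℕ) (γ : CrystElem d) :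
    Matrix (Sym (Fin d) s) (Fin r) ℂ :=
  ∑ t ∈ Finset.range (s + 1), Q s t γ.2 * (Bm γ.1 t)⁻¹ * vmat d r v t

/-- `f` has accuracy `p`: every monomial (hence every polynomial) of degree `< p`
is an a.e. linear combination of the `Γ`-translates of the components of `f`. -/
def HasAccuracyVec (d r p : ℕ) (Γ : Set (CrystElem d))
    (f : (Fin d → ℝ) → Fin r → ℂ) : Prop :=
  ∀ α : Fin d → ℕ, (∑ i, α i) < p →
    ∃ w : CrystElem d → Fin r → ℂ,
      ∀ᵐ x ∂(MeasureTheory.volume : MeasureTheory.Measure (Fin d → ℝ)),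
        (∏ i, (x i : ℂ) ^ α i) = ∑ᶠ γ ∈ Γ, ∑ i, w γ i * f (crystAct γ x) i

/-- The `Γ`-translates of `f` are independent. -/
def IndepTranslates (d r : ℕ) (Γ : Set (CrystElem d))
    (f : (Fin d → ℝ) → Fin r → ℂ) : Prop :=
  ∀ w : CrystElem d → Fin r → ℂ, (∀ γ ∉ Γ, w γ = 0) →
    (∀ᵐ x ∂(MeasureTheory.volume : MeasureTheory.Measure (Fin d → ℝ)),
      (∑ᶠ γ ∈ Γ, ∑ i, w γ i * f (crystAct γ x) i) = 0) → ∀ γ, w γ = 0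

/-- `f` satisfies the `Γ`-refinement equation `f(x) = ∑_{γ∈Γ} d_γ f(γ⁻¹(Ax))`
with finitely many nonzero `r × r` matrix coefficients `D γ`. -/
def IsRefinableVec (d r : ℕ) (Γ : Set (CrystElem d)) (A : Matrix (Fin d) (Fin d) ℝ)
    (D : CrystElem d → Matrix (Fin r) (Fin r) ℂ)
    (f : (Fin d → ℝ) → Fin r → ℂ) : Prop :=
  {γ | D γ ≠ 0}.Finite ∧ (∀ γ, D γ ≠ 0 → γ ∈ Γ) ∧
    ∀ᵐ x ∂(MeasureTheory.volume : MeasureTheory.Measure (Fin d → ℝ)),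
      f x = ∑ᶠ γ ∈ Γ, (D γ).mulVec (f (crystAct (crystInv γ) (A.mulVec x)))

/-- `P` is a compact fundamental domain for `Γ`. -/
def IsFundDom (d : ℕ) (Γ : Set (CrystElem d)) (P : Set (Fin d → ℝ)) : Prop :=
  IsCompact P ∧ (⋃ γ ∈ Γ, crystAct γ '' P) = Set.univ ∧
    ∀ γ₁ ∈ Γ, ∀ γ₂ ∈ Γ, γ₁ ≠ γ₂ →
      MeasureTheory.volume (crystAct γ₁ '' P ∩ crystAct γ₂ '' P) = 0

/-- The eigenvector equations `Y_[s] = A_[s] Y_[s] L`, written entrywise: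
`y_[s](σ) = A_[s] ∑_{γ∈Γ} y_[s](γ) d_{AγA⁻¹σ⁻¹}` for all `σ ∈ Γ`. -/
def Yeq (d r : ℕ) (Γ : Set (CrystElem d)) (A : Matrix (Fin d) (Fin d) ℝ)
    (Q : (s : ℕ) → (t : ℕ) → (Fin d → ℝ) → Matrix (Sym (Fin d) s) (Sym (Fin d) t) ℂ)
    (Bm : Matrix (Fin d) (Fin d) ℝ → (t : ℕ) → Matrix (Sym (Fin d) t) (Sym (Fin d) t) ℂ)
    (Am : (t : ℕ) → Matrix (Sym (Fin d) t) (Sym (Fin d) t) ℂ)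
    (D : CrystElem d → Matrix (Fin r) (Fin r) ℂ)
    (v : (Fin d → ℕ) → Fin r → ℂ) (s : ℕ) : Prop :=
  ∀ σ ∈ Γ, yMat d r Q Bm v s σ =
    Am s * ∑ᶠ γ ∈ Γ, yMat d r Q Bm v s γ * D (crystMul (crystConj A γ) (crystInv σ))


section Aux

lemma XvecR_eq_ofReal (d t : ℕ) (x : Fin d → ℝ) (m : Sym (Fin d) t) :
    XvecR d t x m = ((Multiset.map x (m : Multiset (Fin d))).prod : ℝ) := by
  unfold XvecR Xvec
  rw [show (fun i => ((x i : ℝ) : ℂ)) = (fun r : ℝ => (r : ℂ)) ∘ x from rfl,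
    ← Multiset.map_map]
  exact Multiset.prod_hom _ (Complex.ofRealHom : ℝ →+* ℂ).toMonoidHom

lemma multiset_prod_eq_finsupp_prod (d : ℕ) (x : Fin d → ℝ) (s : Multiset (Fin d)) :
    (Multiset.map x s).prod = (Multiset.toFinsupp s).prod fun i e => x i ^ e := by
  rw [prod_multiset_map_count, Finsupp.prod]
  rw [Multiset.toFinsupp_support]
  exact Finset.prod_congr rfl fun i _ => by rw [Multiset.toFinsupp_apply]

lemma rows_ext_real {d : ℕ} (T : Finset ℕ) (c : ∀ t : ℕ, Sym (Fin d) t → ℝ)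
    (h : ∀ x : Fin d → ℝ, ∑ t ∈ T, ∑ m : Sym (Fin d) t,
      c t m * (Multiset.map x (m : Multiset (Fin d))).prod = 0) :
    ∀ t ∈ T, ∀ m, c t m = 0 := by
  classical
  set q : MvPolynomial (Fin d) ℝ :=
    ∑ t ∈ T, ∑ m : Sym (Fin d) t,
      MvPolynomial.monomial (Multiset.toFinsupp (m : Multiset (Fin d))) (c t m) with hq
  have heval : ∀ x : Fin d → ℝ, MvPolynomial.eval x q = 0 := by
    intro x
    rw [hq, map_sum]
    rw [show (0:ℝ) = ∑ t ∈ T, ∑ m : Sym (Fin d) t,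
        c t m * (Multiset.map x (m : Multiset (Fin d))).prod from (h x).symm]
    refine Finset.sum_congr rfl fun t _ => ?_
    rw [map_sum]
    refine Finset.sum_congr rfl fun m _ => ?_
    rw [MvPolynomial.eval_monomial, multiset_prod_eq_finsupp_prod]
  have hq0 : q = 0 := MvPolynomial.funext (by simpa using heval)
  intro t₀ ht₀ m₀
  have hco := congrArg (MvPolynomial.coeff (Multiset.toFinsupp (m₀ : Multiset (Fin d)))) hq0
  rw [hq] at hco
  simp only [MvPolynomial.coeff_sum, MvPolynomial.coeff_monomial, MvPolynomial.coeff_zero] at hco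
  rw [Finset.sum_eq_single t₀] at hco
  · rw [Finset.sum_eq_single m₀, if_pos rfl] at hco
    · exact hco
    · intro m _ hm
      rw [if_neg]
      intro hEq
      exact hm (Sym.coe_injective (Multiset.toFinsupp.injective hEq))
    · intro hm; exact absurd (Finset.mem_univ m₀) hm
  · intro t _ ht
    refine Finset.sum_eq_zero fun m _ => ?_
    rw [if_neg]
    intro hEq
    have : (m : Multiset (Fin d)) = (m₀ : Multiset (Fin d)) :=
      Multiset.toFinsupp.injective hEq
    have hcard : t = t₀ := by
      rw [← m.prop, ← m₀.prop]
      exact congrArg Multiset.card this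
    exact ht hcard
  · intro h'; exact absurd ht₀ h'

lemma rows_ext {d : ℕ} (T : Finset ℕ) (c : ∀ t : ℕ, Sym (Fin d) t → ℂ)
    (h : ∀ x : Fin d → ℝ, ∑ t ∈ T, ∑ m : Sym (Fin d) t, c t m * XvecR d t x m = 0) :
    ∀ t ∈ T, ∀ m, c t m = 0 := by
  have hre := rows_ext_real T (fun t m => (c t m).re) ?_
  have him := rows_ext_real T (fun t m => (c t m).im) ?_
  · intro t ht m
    exact Complex.ext (hre t ht m) (him t ht m)
  · intro x
    have := congrArg Complex.im (h x)
    simp only [Complex.im_sum, Complex.zero_im] at this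
    rw [← this]
    refine Finset.sum_congr rfl fun t _ => Finset.sum_congr rfl fun m _ => ?_
    rw [XvecR_eq_ofReal]
    simp [Complex.mul_im]
  · intro x
    have := congrArg Complex.re (h x)
    simp only [Complex.re_sum, Complex.zero_re] at this
    rw [← this]
    refine Finset.sum_congr rfl fun t _ => Finset.sum_congr rfl fun m _ => ?_
    rw [XvecR_eq_ofReal]
    simp [Complex.mul_re]

lemma matFam_ext {d : ℕ} {ι : Type*} (T : Finset ℕ)
    (M N : ∀ t : ℕ, Matrix ι (Sym (Fin d) t) ℂ)
    (h : ∀ x : Fin d → ℝ,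
      ∑ t ∈ T, (M t).mulVec (XvecR d t x) = ∑ t ∈ T, (N t).mulVec (XvecR d t x)) :
    ∀ t ∈ T, M t = N t := by
  intro t ht
  ext a b
  have key := rows_ext T (fun t m => M t a m - N t a m) ?_ t ht b
  · linear_combination key
  · intro x
    have := congrArg (fun v => v a) (h x)
    simp only [Finset.sum_apply, Matrix.mulVec, dotProduct] at this
    simp only [sub_mul, Finset.sum_sub_distrib]
    rw [this]
    ring


end Aux

section Grp

variable {d : ℕ}

lemma crystInv_fst (γ : CrystElem d) : (crystInv γ).1 = (γ.1)⁻¹ := rfl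
lemma crystInv_snd (γ : CrystElem d) : (crystInv γ).2 = -(γ.1.mulVec γ.2) := rfl

lemma crystInv_crystInv (γ : CrystElem d) (h : IsUnit γ.1.det) :
    crystInv (crystInv γ) = γ := by
  unfold crystInv
  refine Prod.ext (Matrix.nonsing_inv_nonsing_inv _ h) ?_
  show -((γ.1)⁻¹.mulVec (-(γ.1.mulVec γ.2))) = γ.2
  rw [Matrix.mulVec_neg, neg_neg, Matrix.mulVec_mulVec, Matrix.nonsing_inv_mul _ h,
    Matrix.one_mulVec]

lemma crystConj_eq (A : Matrix (Fin d) (Fin d) ℝ) (hA : IsUnit A.det)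
    (γ : CrystElem d) (h : IsUnit γ.1.det) :
    crystConj A γ = (A * γ.1 * A⁻¹, A.mulVec γ.2) := by
  unfold crystConj
  refine Prod.ext rfl ?_
  show (A * γ.1 * A⁻¹)⁻¹.mulVec ((A * γ.1).mulVec γ.2) = A.mulVec γ.2
  rw [Matrix.mul_inv_rev, Matrix.mul_inv_rev, Matrix.nonsing_inv_nonsing_inv _ hA,
    Matrix.mulVec_mulVec]
  have : A * (γ.1⁻¹ * A⁻¹) * (A * γ.1) = A := by
    rw [mul_assoc, mul_assoc, ← mul_assoc A⁻¹ A γ.1, Matrix.nonsing_inv_mul _ hA,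
      one_mul, ← mul_assoc, mul_assoc A γ.1⁻¹ γ.1, Matrix.nonsing_inv_mul _ h, mul_one]
  rw [this]

lemma crystInv_crystMul (γ₂ γ₁ : CrystElem d)
    (h2 : IsUnit γ₂.1.det) (h1 : IsUnit γ₁.1.det) :
    crystInv (crystMul γ₂ γ₁) = crystMul (crystInv γ₁) (crystInv γ₂) := by
  unfold crystInv crystMul
  refine Prod.ext (Matrix.mul_inv_rev _ _) ?_
  show -((γ₂.1 * γ₁.1).mulVec (γ₁.2 + (γ₁.1)⁻¹.mulVec γ₂.2)) =
    -(γ₂.1.mulVec γ₂.2) + ((γ₂.1)⁻¹)⁻¹.mulVec (-(γ₁.1.mulVec γ₁.2))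
  rw [Matrix.nonsing_inv_nonsing_inv _ h2, Matrix.mulVec_add, Matrix.mulVec_mulVec,
    Matrix.mulVec_neg, Matrix.mulVec_mulVec, mul_assoc, Matrix.mul_nonsing_inv _ h1,
    mul_one, neg_add, ← Matrix.mulVec_mulVec]
  abel

lemma crystConj_crystInv (A : Matrix (Fin d) (Fin d) ℝ) (hA : IsUnit A.det)
    (γ : CrystElem d) (h : IsUnit γ.1.det) :
    crystConj A (crystInv γ) = crystInv (crystConj A γ) := by
  have hinv : IsUnit (γ.1)⁻¹.det := by
    rw [Matrix.det_nonsing_inv]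
    exact isUnit_ringInverse.mpr h
  rw [crystConj_eq A hA γ h, crystConj_eq A hA (crystInv γ) hinv]
  unfold crystInv
  refine Prod.ext ?_ ?_
  · show A * (γ.1)⁻¹ * A⁻¹ = (A * γ.1 * A⁻¹)⁻¹
    rw [Matrix.mul_inv_rev, Matrix.mul_inv_rev, Matrix.nonsing_inv_nonsing_inv _ hA,
      mul_assoc]
  · show A.mulVec (-(γ.1.mulVec γ.2)) = -((A * γ.1 * A⁻¹).mulVec (A.mulVec γ.2))
    rw [Matrix.mulVec_neg, Matrix.mulVec_mulVec, Matrix.mulVec_mulVec,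
      mul_assoc (A * γ.1) A⁻¹ A, Matrix.nonsing_inv_mul _ hA, mul_one]

end Grp

section Core

variable {d : ℕ}

lemma sum_mulVec {ι κ β : Type*} [Fintype κ] [DecidableEq κ] (s : Finset β)
    (f : β → Matrix ι κ ℂ) (v : κ → ℂ) :
    (∑ i ∈ s, f i).mulVec v = ∑ i ∈ s, (f i).mulVec v := by
  ext j
  simp only [Matrix.mulVec, dotProduct, Finset.sum_apply, Matrix.sum_apply,
    Finset.sum_mul]
  exact Finset.sum_comm

lemma mulVec_sumVec {ι κ β : Type*} [Fintype κ] (s : Finset β)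
    (M : Matrix ι κ ℂ) (v : β → κ → ℂ) :
    M.mulVec (∑ i ∈ s, v i) = ∑ i ∈ s, M.mulVec (v i) := by
  rw [← Matrix.mulVecLin_apply, map_sum]
  simp [Matrix.mulVecLin_apply]

lemma mat_ext {ι : Type*} {t : ℕ} (M N : Matrix ι (Sym (Fin d) t) ℂ)
    (h : ∀ x : Fin d → ℝ, M.mulVec (XvecR d t x) = N.mulVec (XvecR d t x)) : M = N := by
  classical
  have key := matFam_ext {t} (fun u => if h : t = u then h ▸ M else 0)
    (fun u => if h : t = u then h ▸ N else 0) ?_ t (Finset.mem_singleton_self t)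
  · simpa using key
  · intro x
    simp only [Finset.sum_singleton, dif_pos rfl]
    exact h x

/-- `Q̃_[s,t](γ) = Q_[s,t](l) b_[t]⁻¹`. -/
def Pmat (Q : (s : ℕ) → (t : ℕ) → (Fin d → ℝ) → Matrix (Sym (Fin d) s) (Sym (Fin d) t) ℂ)
    (Bm : Matrix (Fin d) (Fin d) ℝ → (t : ℕ) → Matrix (Sym (Fin d) t) (Sym (Fin d) t) ℂ)
    (s t : ℕ) (γ : CrystElem d) : Matrix (Sym (Fin d) s) (Sym (Fin d) t) ℂ :=
  Q s t γ.2 * (Bm γ.1 t)⁻¹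

/-- The "identity" family of matrices. -/
def Nmat (d s t : ℕ) : Matrix (Sym (Fin d) s) (Sym (Fin d) t) ℂ :=
  if h : s = t then h ▸ 1 else 0

lemma Nmat_self (s : ℕ) : Nmat d s s = 1 := by simp [Nmat]

lemma Nmat_mulVec_sum (s : ℕ) (x : Fin d → ℝ) :
    ∑ t ∈ Finset.range (s + 1), (Nmat d s t).mulVec (XvecR d t x) = XvecR d s x := by
  rw [Finset.sum_range_succ, Nmat_self, Matrix.one_mulVec]
  rw [Finset.sum_eq_zero, zero_add]
  intro t ht
  have : s ≠ t := (Finset.mem_range.mp ht).ne'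
  simp [Nmat, this]

lemma Nmat_mul_sum {r : ℕ} (s : ℕ) (B : (t : ℕ) → Matrix (Sym (Fin d) t) (Fin r) ℂ) :
    ∑ t ∈ Finset.range (s + 1), Nmat d s t * B t = B s := by
  rw [Finset.sum_range_succ, Nmat_self, Matrix.one_mul]
  rw [Finset.sum_eq_zero, zero_add]
  intro t ht
  have : s ≠ t := (Finset.mem_range.mp ht).ne'
  simp [Nmat, this]

lemma swap_tu {β : Type*} [AddCommMonoid β] (s : ℕ) (f : ℕ → ℕ → β) :
    ∑ t ∈ Finset.range (s + 1), ∑ u ∈ Finset.Icc t s, f u t =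
      ∑ u ∈ Finset.range (s + 1), ∑ t ∈ Finset.range (u + 1), f u t := by
  refine Finset.sum_comm' ?_
  intro t u
  simp only [Finset.mem_range, Finset.mem_Icc, Nat.lt_succ_iff]
  omega

end Core

section Cryst

variable {d : ℕ} {G : Finset (Matrix (Fin d) (Fin d) ℝ)} {Λ : Set (Fin d → ℝ)}
variable {A : Matrix (Fin d) (Fin d) ℝ}
variable {Q : (s : ℕ) → (t : ℕ) → (Fin d → ℝ) → Matrix (Sym (Fin d) s) (Sym (Fin d) t) ℂ}
variable {Bm : Matrix (Fin d) (Fin d) ℝ → (t : ℕ) → Matrix (Sym (Fin d) t) (Sym (Fin d) t) ℂ}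
variable {Am : (t : ℕ) → Matrix (Sym (Fin d) t) (Sym (Fin d) t) ℂ}

lemma unit_of_memG (hcr : IsSplittingCrystal d G Λ) {b : Matrix (Fin d) (Fin d) ℝ}
    (hb : b ∈ G) : IsUnit b.det := by
  have horth := hcr.2.2.2.1 b hb
  have : b.det * b.det = 1 := by
    have := congrArg Matrix.det horth
    rwa [Matrix.det_mul, Matrix.det_transpose, Matrix.det_one] at this
  exact IsUnit.of_mul_eq_one _ this

lemma detA_unit (hA : IsAdmissible G Λ A) : IsUnit A.det := by
  rw [isUnit_iff_ne_zero]
  intro h0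
  have hmap : (A.map (algebraMap ℝ ℂ)).det = 0 := by
    have h1 := RingHom.map_det (algebraMap ℝ ℂ) A
    rw [h0, map_zero, RingHom.mapMatrix_apply] at h1
    exact h1.symm
  have hco : (A.map (algebraMap ℝ ℂ)).charpoly.coeff 0 = 0 := by
    have := Matrix.det_eq_sign_charpoly_coeff (A.map (algebraMap ℝ ℂ))
    rw [hmap] at this
    have hne : ((-1 : ℂ)) ^ Fintype.card (Fin d) ≠ 0 := by
      simp [pow_ne_zero]
    field_simp at this
    exact (mul_eq_zero.mp this.symm).resolve_left hne
  have hroot : (A.map (algebraMap ℝ ℂ)).charpoly.IsRoot 0 := by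
    rw [Polynomial.IsRoot, ← Polynomial.coeff_zero_eq_eval_zero]
    exact hco
  have := hA.1 0 hroot
  simp at this
  linarith

lemma neg_mem_Lambda (hcr : IsSplittingCrystal d G Λ) {v : Fin d → ℝ} (hv : v ∈ Λ) :
    -v ∈ Λ := by
  obtain ⟨R, _, hR⟩ := hcr.2.2.2.2.1
  rw [hR] at hv ⊢
  obtain ⟨k, hk⟩ := hv
  refine ⟨-k, ?_⟩
  rw [hk, show (fun i => (((-k) i : ℤ) : ℝ)) = -(fun i => ((k i : ℤ) : ℝ)) by
    ext i; simp, Matrix.mulVec_neg]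

lemma crystInv_mem (hcr : IsSplittingCrystal d G Λ) {γ : CrystElem d}
    (hγ : γ ∈ crystSet G Λ) : crystInv γ ∈ crystSet G Λ := by
  refine ⟨hcr.2.2.1 _ hγ.1, ?_⟩
  exact neg_mem_Lambda hcr (hcr.2.2.2.2.2 _ hγ.1 _ hγ.2)

lemma crystSet_inv_image (hcr : IsSplittingCrystal d G Λ) :
    crystInv '' crystSet G Λ = crystSet G Λ := by
  apply Set.Subset.antisymm
  · rintro τ ⟨γ, hγ, rfl⟩
    exact crystInv_mem hcr hγ
  · intro γ hγ
    exact ⟨crystInv γ, crystInv_mem hcr hγ,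
      crystInv_crystInv γ (unit_of_memG hcr hγ.1)⟩

lemma Bmul_inv (hcr : IsSplittingCrystal d G Λ)
    (hBm : ∀ b ∈ G, ∀ t, IsMonMat d t b (Bm b t))
    {b : Matrix (Fin d) (Fin d) ℝ} (hb : b ∈ G) (t : ℕ) :
    Bm b t * Bm b⁻¹ t = 1 := by
  apply mat_ext
  intro x
  rw [Matrix.one_mulVec, ← Matrix.mulVec_mulVec, ← hBm b⁻¹ (hcr.2.2.1 b hb) t x,
    ← hBm b hb t _, Matrix.mulVec_mulVec, Matrix.mul_nonsing_inv _ (unit_of_memG hcr hb),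
    Matrix.one_mulVec]

lemma BmInv_eq (hcr : IsSplittingCrystal d G Λ)
    (hBm : ∀ b ∈ G, ∀ t, IsMonMat d t b (Bm b t))
    {b : Matrix (Fin d) (Fin d) ℝ} (hb : b ∈ G) (t : ℕ) :
    (Bm b t)⁻¹ = Bm b⁻¹ t :=
  Matrix.inv_eq_right_inv (Bmul_inv hcr hBm hb t)

/-- The inverse action `γ⁻¹(x) = b⁻¹ x - l`. -/
def invAct (γ : CrystElem d) (x : Fin d → ℝ) : Fin d → ℝ :=
  (γ.1)⁻¹.mulVec x - γ.2

lemma invAct_crystInv {γ : CrystElem d} (h : IsUnit γ.1.det) (y : Fin d → ℝ) :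
    invAct (crystInv γ) y = γ.1.mulVec y + γ.1.mulVec γ.2 := by
  unfold invAct crystInv
  show ((γ.1)⁻¹)⁻¹.mulVec y - (-(γ.1.mulVec γ.2)) = _
  rw [Matrix.nonsing_inv_nonsing_inv _ h, sub_neg_eq_add]

lemma invAct_crystInv_invAct {γ : CrystElem d} (h : IsUnit γ.1.det) (x : Fin d → ℝ) :
    invAct (crystInv γ) (invAct γ x) = x := by
  rw [invAct_crystInv h]
  unfold invAct
  rw [Matrix.mulVec_sub, Matrix.mulVec_mulVec, Matrix.mul_nonsing_inv _ h,
    Matrix.one_mulVec, sub_add_cancel]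

lemma pt3 (hA : IsUnit A.det) {γ σ : CrystElem d}
    (hγ : IsUnit γ.1.det) (hσ : IsUnit σ.1.det) (x : Fin d → ℝ) :
    invAct (crystMul (crystConj A γ) (crystInv σ)) (A.mulVec x) =
      invAct (crystInv σ) (A.mulVec (invAct γ x)) := by
  rw [invAct_crystInv hσ, crystConj_eq A hA γ hγ]
  show ((A * γ.1 * A⁻¹) * (σ.1)⁻¹)⁻¹.mulVec (A.mulVec x) -
      (-(σ.1.mulVec σ.2) + ((σ.1)⁻¹)⁻¹.mulVec (A.mulVec γ.2)) = _
  have h1 : ((A * γ.1 * A⁻¹) * (σ.1)⁻¹)⁻¹ = σ.1 * (A * (γ.1⁻¹ * A⁻¹)) := by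
    rw [Matrix.mul_inv_rev, Matrix.mul_inv_rev, Matrix.mul_inv_rev,
      Matrix.nonsing_inv_nonsing_inv _ hσ, Matrix.nonsing_inv_nonsing_inv _ hA]
  have h2 : ((σ.1)⁻¹)⁻¹ = σ.1 := Matrix.nonsing_inv_nonsing_inv _ hσ
  rw [h1, h2]
  have h3 : (σ.1 * (A * (γ.1⁻¹ * A⁻¹))).mulVec (A.mulVec x) =
      (σ.1 * (A * γ.1⁻¹)).mulVec x := by
    rw [Matrix.mulVec_mulVec, mul_assoc σ.1 (A * (γ.1⁻¹ * A⁻¹)) A,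
      mul_assoc A (γ.1⁻¹ * A⁻¹) A, mul_assoc γ.1⁻¹ A⁻¹ A,
      Matrix.nonsing_inv_mul _ hA, mul_one]
  rw [h3]
  unfold invAct
  simp only [Matrix.mulVec_sub, Matrix.mulVec_mulVec]
  abel

lemma Pfun (hcr : IsSplittingCrystal d G Λ) (hQ : IsQfam d Q)
    (hBm : ∀ b ∈ G, ∀ t, IsMonMat d t b (Bm b t))
    {γ : CrystElem d} (hγ : γ.1 ∈ G) (s : ℕ) (x : Fin d → ℝ) :
    XvecR d s (invAct γ x) =
      ∑ t ∈ Finset.range (s + 1), (Pmat Q Bm s t γ).mulVec (XvecR d t x) := by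
  rw [invAct, hQ s γ.2 ((γ.1)⁻¹.mulVec x)]
  refine Finset.sum_congr rfl fun t _ => ?_
  rw [Pmat, ← Matrix.mulVec_mulVec]
  rw [BmInv_eq hcr hBm hγ t]
  exact congrArg _ (hBm _ (hcr.2.2.1 _ hγ) t x)

set_option maxHeartbeats 1000000 in
lemma Jfam (hcr : IsSplittingCrystal d G Λ) (hQ : IsQfam d Q)
    (hBm : ∀ b ∈ G, ∀ t, IsMonMat d t b (Bm b t))
    {σ : CrystElem d} (hσ : σ.1 ∈ G) (s : ℕ) :
    ∀ t ∈ Finset.range (s + 1),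
      (∑ u ∈ Finset.Icc t s, Pmat Q Bm s u (crystInv σ) * Pmat Q Bm u t σ) = Nmat d s t := by
  have hσu := unit_of_memG hcr hσ
  have hσ' : (crystInv σ).1 ∈ G := hcr.2.2.1 _ hσ
  refine matFam_ext (Finset.range (s+1))
    (fun t => ∑ u ∈ Finset.Icc t s, Pmat Q Bm s u (crystInv σ) * Pmat Q Bm u t σ)
    (fun t => Nmat d s t) ?_
  intro x
  rw [Nmat_mulVec_sum]
  have step1 : ∑ t ∈ Finset.range (s + 1),
        (∑ u ∈ Finset.Icc t s, Pmat Q Bm s u (crystInv σ) * Pmat Q Bm u t σ).mulVec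
          (XvecR d t x)
      = ∑ t ∈ Finset.range (s + 1), ∑ u ∈ Finset.Icc t s,
          (Pmat Q Bm s u (crystInv σ) * Pmat Q Bm u t σ).mulVec (XvecR d t x) :=
    Finset.sum_congr rfl fun t _ => sum_mulVec _ _ _
  have step2 : ∑ t ∈ Finset.range (s + 1), ∑ u ∈ Finset.Icc t s,
          (Pmat Q Bm s u (crystInv σ) * Pmat Q Bm u t σ).mulVec (XvecR d t x)
      = ∑ u ∈ Finset.range (s + 1), ∑ t ∈ Finset.range (u + 1),
          (Pmat Q Bm s u (crystInv σ) * Pmat Q Bm u t σ).mulVec (XvecR d t x) :=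
    swap_tu s _
  have step3 : ∑ u ∈ Finset.range (s + 1), ∑ t ∈ Finset.range (u + 1),
          (Pmat Q Bm s u (crystInv σ) * Pmat Q Bm u t σ).mulVec (XvecR d t x)
      = ∑ u ∈ Finset.range (s + 1),
          (Pmat Q Bm s u (crystInv σ)).mulVec (XvecR d u (invAct σ x)) := by
    refine Finset.sum_congr rfl fun u _ => ?_
    rw [Pfun hcr hQ hBm hσ u x, mulVec_sumVec]
    exact Finset.sum_congr rfl fun t _ => (Matrix.mulVec_mulVec _ _ _).symm
  have step4 : ∑ u ∈ Finset.range (s + 1),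
          (Pmat Q Bm s u (crystInv σ)).mulVec (XvecR d u (invAct σ x))
      = XvecR d s (invAct (crystInv σ) (invAct σ x)) :=
    (Pfun hcr hQ hBm hσ' s (invAct σ x)).symm
  rw [step1, step2, step3, step4, invAct_crystInv_invAct hσu]

lemma Jv (hcr : IsSplittingCrystal d G Λ) (hQ : IsQfam d Q)
    (hBm : ∀ b ∈ G, ∀ t, IsMonMat d t b (Bm b t)) (r : ℕ)
    (v : (Fin d → ℕ) → Fin r → ℂ)
    {σ : CrystElem d} (hσ : σ.1 ∈ G) (s : ℕ) :
    ∑ u ∈ Finset.range (s + 1), Pmat Q Bm s u (crystInv σ) * yMat d r Q Bm v u σ =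
      vmat d r v s := by
  have hy : ∀ u, yMat d r Q Bm v u σ =
      ∑ t ∈ Finset.range (u + 1), Pmat Q Bm u t σ * vmat d r v t := fun u => rfl
  calc ∑ u ∈ Finset.range (s + 1), Pmat Q Bm s u (crystInv σ) * yMat d r Q Bm v u σ
      = ∑ u ∈ Finset.range (s + 1), ∑ t ∈ Finset.range (u + 1),
          (Pmat Q Bm s u (crystInv σ) * Pmat Q Bm u t σ) * vmat d r v t := by
        refine Finset.sum_congr rfl fun u _ => ?_
        rw [hy, Matrix.mul_sum]
        exact Finset.sum_congr rfl fun t _ => by rw [Matrix.mul_assoc]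
    _ = ∑ t ∈ Finset.range (s + 1), ∑ u ∈ Finset.Icc t s,
          (Pmat Q Bm s u (crystInv σ) * Pmat Q Bm u t σ) * vmat d r v t :=
        (swap_tu s _).symm
    _ = ∑ t ∈ Finset.range (s + 1), Nmat d s t * vmat d r v t := by
        refine Finset.sum_congr rfl fun t ht => ?_
        rw [← Matrix.sum_mul, Jfam hcr hQ hBm hσ s t ht]
    _ = vmat d r v s := Nmat_mul_sum s _

lemma Pss_inv (hcr : IsSplittingCrystal d G Λ) (hQ : IsQfam d Q)
    (hBm : ∀ b ∈ G, ∀ t, IsMonMat d t b (Bm b t))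
    {σ : CrystElem d} (hσ : σ.1 ∈ G) (s : ℕ) :
    Pmat Q Bm s s (crystInv σ) * Pmat Q Bm s s σ = 1 := by
  have := Jfam hcr hQ hBm hσ s s (Finset.self_mem_range_succ s)
  rwa [Finset.Icc_self, Finset.sum_singleton, Nmat_self] at this

set_option maxHeartbeats 1000000 in
lemma Kmat (hcr : IsSplittingCrystal d G Λ) (hAdm : IsAdmissible G Λ A)
    (hQ : IsQfam d Q)
    (hBm : ∀ b ∈ G, ∀ t, IsMonMat d t b (Bm b t))
    (hAm : ∀ t, IsMonMat d t A (Am t))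
    {γ σ : CrystElem d} (hγ : γ ∈ crystSet G Λ) (hσ : σ ∈ crystSet G Λ) (s : ℕ) :
    ∀ t ∈ Finset.range (s + 1),
      Pmat Q Bm s t (crystMul (crystConj A γ) (crystInv σ)) * Am t =
        ∑ u ∈ Finset.Icc t s, Pmat Q Bm s u (crystInv σ) * Am u * Pmat Q Bm u t γ := by
  have hAu := detA_unit hAdm
  have hγu := unit_of_memG hcr hγ.1
  have hσu := unit_of_memG hcr hσ.1
  have hσ' : (crystInv σ).1 ∈ G := hcr.2.2.1 _ hσ.1
  have hconj : crystConj A γ ∈ crystSet G Λ := hAdm.2 γ hγ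
  have hρ : (crystMul (crystConj A γ) (crystInv σ)).1 ∈ G :=
    hcr.2.1 _ hconj.1 _ hσ'
  refine matFam_ext (Finset.range (s+1))
    (fun t => Pmat Q Bm s t (crystMul (crystConj A γ) (crystInv σ)) * Am t)
    (fun t => ∑ u ∈ Finset.Icc t s, Pmat Q Bm s u (crystInv σ) * Am u * Pmat Q Bm u t γ)
    ?_
  intro x
  have stepL : ∑ t ∈ Finset.range (s + 1),
        (Pmat Q Bm s t (crystMul (crystConj A γ) (crystInv σ)) * Am t).mulVec (XvecR d t x)
      = XvecR d s (invAct (crystMul (crystConj A γ) (crystInv σ)) (A.mulVec x)) := by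
    rw [Pfun hcr hQ hBm hρ s (A.mulVec x)]
    refine Finset.sum_congr rfl fun t _ => ?_
    rw [← Matrix.mulVec_mulVec, ← hAm t x]
  have stepR1 : ∑ u ∈ Finset.range (s + 1),
        (Pmat Q Bm s u (crystInv σ)).mulVec (XvecR d u (A.mulVec (invAct γ x)))
      = XvecR d s (invAct (crystInv σ) (A.mulVec (invAct γ x))) :=
    (Pfun hcr hQ hBm hσ' s _).symm
  have stepR2 : ∀ u, (Pmat Q Bm s u (crystInv σ)).mulVec (XvecR d u (A.mulVec (invAct γ x)))
      = ∑ t ∈ Finset.range (u + 1),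
          (Pmat Q Bm s u (crystInv σ) * Am u * Pmat Q Bm u t γ).mulVec (XvecR d t x) := by
    intro u
    rw [hAm u, Pfun hcr hQ hBm hγ.1 u x, mulVec_sumVec, mulVec_sumVec]
    refine Finset.sum_congr rfl fun t _ => ?_
    rw [Matrix.mulVec_mulVec, Matrix.mulVec_mulVec]
  have stepR3 : ∑ t ∈ Finset.range (s + 1),
        (∑ u ∈ Finset.Icc t s,
          Pmat Q Bm s u (crystInv σ) * Am u * Pmat Q Bm u t γ).mulVec (XvecR d t x)
      = ∑ t ∈ Finset.range (s + 1), ∑ u ∈ Finset.Icc t s,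
          (Pmat Q Bm s u (crystInv σ) * Am u * Pmat Q Bm u t γ).mulVec (XvecR d t x) :=
    Finset.sum_congr rfl fun t _ => sum_mulVec _ _ _
  rw [stepL, stepR3, swap_tu s, pt3 hAu hγu hσu x, ← stepR1]
  exact Finset.sum_congr rfl fun u _ => stepR2 u

end Cryst

section Helpers

variable {d : ℕ} {G : Finset (Matrix (Fin d) (Fin d) ℝ)} {Λ : Set (Fin d → ℝ)}
variable {A : Matrix (Fin d) (Fin d) ℝ}

lemma mat_left_cancel {n : Type*} [Fintype n] [DecidableEq n]
    {c : Matrix n n ℝ} (hu : IsUnit c.det) {κ : Type*} [Fintype κ]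
    {a b : Matrix n κ ℝ} (h : c * a = c * b) : a = b := by
  have := congrArg (fun M => c⁻¹ * M) h
  simpa [← Matrix.mul_assoc, Matrix.nonsing_inv_mul _ hu] using this

lemma mat_right_cancel {n : Type*} [Fintype n] [DecidableEq n]
    {c : Matrix n n ℝ} (hu : IsUnit c.det) {κ : Type*} [Fintype κ]
    {a b : Matrix κ n ℝ} (h : a * c = b * c) : a = b := by
  have := congrArg (fun M => M * c⁻¹) h
  simpa [Matrix.mul_assoc, Matrix.mul_nonsing_inv _ hu] using this

lemma vec_cancel {n : Type*} [Fintype n] [DecidableEq n]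
    {c : Matrix n n ℝ} (hu : IsUnit c.det)
    {x y : n → ℝ} (h : c.mulVec x = c.mulVec y) : x = y := by
  have := congrArg (fun w => c⁻¹.mulVec w) h
  simpa [Matrix.mulVec_mulVec, Matrix.nonsing_inv_mul _ hu] using this

lemma inj_mulL {σ : CrystElem d} (hσ : IsUnit σ.1.det) :
    Function.Injective (fun τ : CrystElem d => crystMul σ τ) := by
  intro a b h
  unfold crystMul at h
  have h1 : σ.1 * a.1 = σ.1 * b.1 := congrArg Prod.fst h
  have h1' : a.1 = b.1 := mat_left_cancel hσ h1
  have h2 : a.2 + (a.1)⁻¹.mulVec σ.2 = b.2 + (b.1)⁻¹.mulVec σ.2 := congrArg Prod.snd h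
  rw [h1'] at h2
  exact Prod.ext h1' (add_right_cancel h2)

lemma inj_mulR {σ : CrystElem d} (hσ : IsUnit σ.1.det) :
    Function.Injective (fun τ : CrystElem d => crystMul τ (crystInv σ)) := by
  have h2 : ((σ.1)⁻¹)⁻¹ = σ.1 := Matrix.nonsing_inv_nonsing_inv _ hσ
  have hiu : IsUnit (σ.1)⁻¹.det := by
    rw [Matrix.det_nonsing_inv]
    exact isUnit_ringInverse.mpr hσ
  intro a b h
  unfold crystMul crystInv at h
  have h1 : a.1 * (σ.1)⁻¹ = b.1 * (σ.1)⁻¹ := congrArg Prod.fst h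
  have h1' : a.1 = b.1 := mat_right_cancel hiu h1
  have hsnd := congrArg Prod.snd h
  simp only at hsnd
  have h3 : ((σ.1)⁻¹)⁻¹.mulVec a.2 = ((σ.1)⁻¹)⁻¹.mulVec b.2 := add_left_cancel hsnd
  rw [h2] at h3
  exact Prod.ext h1' (vec_cancel hσ h3)

lemma inj_conj (hcr : IsSplittingCrystal d G Λ) (hAu : IsUnit A.det) :
    Set.InjOn (crystConj A) (crystSet G Λ) := by
  intro a ha b hb h
  rw [crystConj_eq A hAu a (unit_of_memG hcr ha.1),
    crystConj_eq A hAu b (unit_of_memG hcr hb.1)] at h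
  have h1 : A * a.1 * A⁻¹ = A * b.1 * A⁻¹ := congrArg Prod.fst h
  have hiu : IsUnit (A)⁻¹.det := by
    rw [Matrix.det_nonsing_inv]
    exact isUnit_ringInverse.mpr hAu
  have h1' : a.1 = b.1 := mat_left_cancel hAu (mat_right_cancel hiu h1)
  have h2 : A.mulVec a.2 = A.mulVec b.2 := congrArg Prod.snd h
  exact Prod.ext h1' (vec_cancel hAu h2)

lemma inj_g (hcr : IsSplittingCrystal d G Λ) (hAu : IsUnit A.det)
    {σ : CrystElem d} (hσ : IsUnit σ.1.det) :
    Set.InjOn (fun γ₀ => crystMul σ (crystConj A γ₀)) (crystSet G Λ) :=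
  fun a ha b hb h => inj_conj hcr hAu ha hb (inj_mulL hσ h)

lemma inj_rho (hcr : IsSplittingCrystal d G Λ) (hAu : IsUnit A.det)
    {σ : CrystElem d} (hσ : IsUnit σ.1.det) :
    Set.InjOn (fun γ => crystMul (crystConj A γ) (crystInv σ)) (crystSet G Λ) :=
  fun a ha b hb h => inj_conj hcr hAu ha hb (inj_mulR hσ h)

lemma finsum_mem_crystSet_eq_sum {M : Type*} [AddCommMonoid M]
    (f : CrystElem d → M) (W : Finset (CrystElem d))
    (hWsub : ↑W ⊆ crystSet G Λ)
    (h0 : ∀ γ ∈ crystSet G Λ, γ ∉ W → f γ = 0) :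
    ∑ᶠ γ ∈ crystSet G Λ, f γ = ∑ γ ∈ W, f γ := by
  refine finsum_mem_eq_sum_of_inter_support_eq f ?_
  ext γ
  constructor
  · rintro ⟨hγ, hsupp⟩
    refine ⟨?_, hsupp⟩
    by_contra hW
    exact hsupp (h0 γ hγ hW)
  · rintro ⟨hγ, hsupp⟩
    exact ⟨hWsub hγ, hsupp⟩

end Helpers






section Assembly

variable {d : ℕ} {G : Finset (Matrix (Fin d) (Fin d) ℝ)} {Λ : Set (Fin d → ℝ)}
variable {A : Matrix (Fin d) (Fin d) ℝ}
variable {Q : (s : ℕ) → (t : ℕ) → (Fin d → ℝ) → Matrix (Sym (Fin d) s) (Sym (Fin d) t) ℂ}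
variable {Bm : Matrix (Fin d) (Fin d) ℝ → (t : ℕ) → Matrix (Sym (Fin d) t) (Sym (Fin d) t) ℂ}
variable {Am : (t : ℕ) → Matrix (Sym (Fin d) t) (Sym (Fin d) t) ℂ}

lemma inj_inv (hcr : IsSplittingCrystal d G Λ) :
    Set.InjOn crystInv (crystSet G Λ) := by
  intro a ha b hb h
  rw [← crystInv_crystInv a (unit_of_memG hcr ha.1), h,
    crystInv_crystInv b (unit_of_memG hcr hb.1)]

lemma hgi_inv (hcr : IsSplittingCrystal d G Λ) (hAdm : IsAdmissible G Λ A)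
    {γ σ : CrystElem d} (hγ : γ ∈ crystSet G Λ) (hσ : σ ∈ crystSet G Λ) :
    crystInv (crystMul σ (crystConj A (crystInv γ))) =
      crystMul (crystConj A γ) (crystInv σ) := by
  have hAu := detA_unit hAdm
  have hγu := unit_of_memG hcr hγ.1
  have hσu := unit_of_memG hcr hσ.1
  have hconjmem : crystConj A γ ∈ crystSet G Λ := hAdm.2 γ hγ
  have hconju : IsUnit (crystConj A γ).1.det := unit_of_memG hcr hconjmem.1
  have hinvconju : IsUnit (crystInv (crystConj A γ)).1.det := by
    rw [crystInv_fst, Matrix.det_nonsing_inv]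
    exact isUnit_ringInverse.mpr hconju
  rw [crystConj_crystInv A hAu γ hγu,
    crystInv_crystMul σ (crystInv (crystConj A γ)) hσu hinvconju,
    crystInv_crystInv _ hconju]

set_option maxHeartbeats 1000000 in
lemma hT_lemma (hcr : IsSplittingCrystal d G Λ) (hAdm : IsAdmissible G Λ A)
    (hQ : IsQfam d Q)
    (hBm : ∀ b ∈ G, ∀ t, IsMonMat d t b (Bm b t))
    (hAm : ∀ t, IsMonMat d t A (Am t))
    (r : ℕ) (v : (Fin d → ℕ) → Fin r → ℂ)
    {γ σ : CrystElem d} (hγ : γ ∈ crystSet G Λ) (hσ : σ ∈ crystSet G Λ)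
    (s : ℕ) (E : Matrix (Fin r) (Fin r) ℂ) :
    ∑ t ∈ Finset.range (s + 1),
      Pmat Q Bm s t (crystMul (crystConj A γ) (crystInv σ)) * (Am t * vmat d r v t * E)
    = ∑ u ∈ Finset.range (s + 1),
      Pmat Q Bm s u (crystInv σ) * (Am u * (yMat d r Q Bm v u γ * E)) := by
  have hK := Kmat hcr hAdm hQ hBm hAm hγ hσ s
  have step1 : ∀ t ∈ Finset.range (s + 1),
      Pmat Q Bm s t (crystMul (crystConj A γ) (crystInv σ)) * (Am t * vmat d r v t * E)
      = ∑ u ∈ Finset.Icc t s,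
          Pmat Q Bm s u (crystInv σ) * (Am u * (Pmat Q Bm u t γ * (vmat d r v t * E))) := by
    intro t ht
    have h1 : Pmat Q Bm s t (crystMul (crystConj A γ) (crystInv σ)) * (Am t * vmat d r v t * E)
        = (Pmat Q Bm s t (crystMul (crystConj A γ) (crystInv σ)) * Am t) * (vmat d r v t * E) := by
      simp only [Matrix.mul_assoc]
    rw [h1, hK t ht, Matrix.sum_mul]
    exact Finset.sum_congr rfl fun u _ => by simp only [Matrix.mul_assoc]
  rw [Finset.sum_congr rfl step1, swap_tu s]
  refine Finset.sum_congr rfl fun u _ => ?_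
  rw [show yMat d r Q Bm v u γ = ∑ t ∈ Finset.range (u + 1), Pmat Q Bm u t γ * vmat d r v t
      from rfl, Matrix.sum_mul, Matrix.mul_sum, Matrix.mul_sum]
  exact Finset.sum_congr rfl fun t _ => by simp only [Matrix.mul_assoc]

set_option maxHeartbeats 1000000 in
lemma hR_lemma {r : ℕ} (hcr : IsSplittingCrystal d G Λ) (hAdm : IsAdmissible G Λ A)
    (hQ : IsQfam d Q)
    (hBm : ∀ b ∈ G, ∀ t, IsMonMat d t b (Bm b t))
    (hAm : ∀ t, IsMonMat d t A (Am t))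
    (D : CrystElem d → Matrix (Fin r) (Fin r) ℂ)
    (hDfin : {γ | D γ ≠ 0}.Finite)
    (v : (Fin d → ℕ) → Fin r → ℂ)
    {σ : CrystElem d} (hσ : σ ∈ crystSet G Λ) (s : ℕ) :
    (∑ᶠ τ ∈ {τ | ∃ γ₀ ∈ crystSet G Λ, τ = crystMul σ (crystConj A γ₀)},
      ∑ t ∈ Finset.range (s + 1),
        (Q s t (crystInv τ).2 * (Bm (crystInv τ).1 t)⁻¹) *
          (Am t * vmat d r v t * D (crystInv τ)))
    = ∑ u ∈ Finset.range (s + 1), Pmat Q Bm s u (crystInv σ) *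
        (Am u * ∑ᶠ γ ∈ crystSet G Λ,
          yMat d r Q Bm v u γ * D (crystMul (crystConj A γ) (crystInv σ))) := by
  classical
  have hAu := detA_unit hAdm
  have hσu := unit_of_memG hcr hσ.1
  -- the summand as a function of τ
  set F : CrystElem d → Matrix (Sym (Fin d) s) (Fin r) ℂ := fun τ =>
    ∑ t ∈ Finset.range (s + 1),
      Pmat Q Bm s t (crystInv τ) * (Am t * vmat d r v t * D (crystInv τ)) with hF
  -- the reindexed summand
  set T : CrystElem d → Matrix (Sym (Fin d) s) (Fin r) ℂ := fun γ =>
    ∑ t ∈ Finset.range (s + 1),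
      Pmat Q Bm s t (crystMul (crystConj A γ) (crystInv σ)) *
        (Am t * vmat d r v t * D (crystMul (crystConj A γ) (crystInv σ))) with hT
  have e0 : (∑ᶠ τ ∈ {τ | ∃ γ₀ ∈ crystSet G Λ, τ = crystMul σ (crystConj A γ₀)},
      ∑ t ∈ Finset.range (s + 1),
        (Q s t (crystInv τ).2 * (Bm (crystInv τ).1 t)⁻¹) *
          (Am t * vmat d r v t * D (crystInv τ)))
      = ∑ᶠ τ ∈ (fun γ₀ => crystMul σ (crystConj A γ₀)) '' crystSet G Λ, F τ := by
    refine finsum_mem_congr ?_ fun τ _ => rfl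
    ext τ
    simp only [Set.mem_setOf_eq, Set.mem_image]
    exact exists_congr fun γ₀ => ⟨fun ⟨h1, h2⟩ => ⟨h1, h2.symm⟩, fun ⟨h1, h2⟩ => ⟨h1, h2.symm⟩⟩
  have e1 : ∑ᶠ τ ∈ (fun γ₀ => crystMul σ (crystConj A γ₀)) '' crystSet G Λ, F τ
      = ∑ᶠ γ₀ ∈ crystSet G Λ, F (crystMul σ (crystConj A γ₀)) :=
    finsum_mem_image (inj_g hcr hAu hσu)
  have e2 : ∑ᶠ γ₀ ∈ crystSet G Λ, F (crystMul σ (crystConj A γ₀))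
      = ∑ᶠ γ ∈ crystSet G Λ, F (crystMul σ (crystConj A (crystInv γ))) := by
    have := finsum_mem_image (s := crystSet G Λ) (g := crystInv)
      (f := fun γ₀ => F (crystMul σ (crystConj A γ₀))) (inj_inv hcr)
    rwa [crystSet_inv_image hcr] at this
  have e3 : ∑ᶠ γ ∈ crystSet G Λ, F (crystMul σ (crystConj A (crystInv γ)))
      = ∑ᶠ γ ∈ crystSet G Λ, T γ := by
    refine finsum_mem_congr rfl fun γ hγ => ?_
    rw [hF, hT]
    simp only
    rw [hgi_inv hcr hAdm hγ hσ]
  -- the finite support set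
  set Wset : Set (CrystElem d) := crystSet G Λ ∩
    (fun γ => crystMul (crystConj A γ) (crystInv σ)) ⁻¹' {δ | D δ ≠ 0} with hWset
  have hWfin : Wset.Finite := by
    refine Set.Finite.of_finite_image (hDfin.subset ?_)
      ((inj_rho hcr hAu hσu).mono Set.inter_subset_left)
    rintro δ ⟨γ, ⟨_, hpre⟩, rfl⟩
    exact hpre
  set W : Finset (CrystElem d) := hWfin.toFinset with hW
  have hWsub : ↑W ⊆ crystSet G Λ := by
    intro γ hγ
    rw [hW, Set.Finite.coe_toFinset] at hγ
    exact hγ.1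
  have hmemW : ∀ γ, γ ∈ W ↔ γ ∈ Wset := fun γ => Set.Finite.mem_toFinset hWfin
  have hDzero : ∀ γ ∈ crystSet G Λ, γ ∉ W →
      D (crystMul (crystConj A γ) (crystInv σ)) = 0 := by
    intro γ hγ hγW
    by_contra hD
    exact hγW ((hmemW γ).mpr ⟨hγ, hD⟩)
  have e4 : ∑ᶠ γ ∈ crystSet G Λ, T γ = ∑ γ ∈ W, T γ := by
    refine finsum_mem_crystSet_eq_sum T W hWsub fun γ hγ hγW => ?_
    rw [hT]
    simp only
    rw [hDzero γ hγ hγW]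
    refine Finset.sum_eq_zero fun t _ => ?_
    rw [Matrix.mul_zero, Matrix.mul_zero]
  have e5 : ∑ γ ∈ W, T γ = ∑ u ∈ Finset.range (s + 1), Pmat Q Bm s u (crystInv σ) *
      (Am u * ∑ γ ∈ W, yMat d r Q Bm v u γ *
        D (crystMul (crystConj A γ) (crystInv σ))) := by
    have eT : ∀ γ ∈ W, T γ = ∑ u ∈ Finset.range (s + 1),
        Pmat Q Bm s u (crystInv σ) * (Am u * (yMat d r Q Bm v u γ *
          D (crystMul (crystConj A γ) (crystInv σ)))) := fun γ hγ =>
      hT_lemma hcr hAdm hQ hBm hAm r v (hWsub hγ) hσ s _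
    rw [Finset.sum_congr rfl eT, Finset.sum_comm]
    refine Finset.sum_congr rfl fun u _ => ?_
    rw [Matrix.mul_sum, Matrix.mul_sum]
  have e6 : ∀ u, (∑ᶠ γ ∈ crystSet G Λ,
      yMat d r Q Bm v u γ * D (crystMul (crystConj A γ) (crystInv σ)))
      = ∑ γ ∈ W, yMat d r Q Bm v u γ * D (crystMul (crystConj A γ) (crystInv σ)) := by
    intro u
    refine finsum_mem_crystSet_eq_sum _ W hWsub fun γ hγ hγW => ?_
    rw [hDzero γ hγ hγW, Matrix.mul_zero]
  rw [e0, e1, e2, e3, e4, e5]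
  exact Finset.sum_congr rfl fun u _ => by rw [e6 u]

end Assembly

/-- Let `γ₁,…,γ_m` be a complete set of representatives of the left cosets
`Γ_i = γ_i AΓA⁻¹` of `AΓA⁻¹` in `Γ`, where `m = |det A|`. Then, for row vectors
`v_α` with `v₀ ≠ 0`, the condition
`y_[s](γ_i) = A_[s] ∑_{γ∈Γ} y_[s](γ) d_{AγA⁻¹γ_i⁻¹}` (for `0 ≤ s < p`, all `i`)
is equivalent to
`v_[s] = ∑_{γ∈Γ_i} ∑_{t=0}^{s} Q̃_[s,t](γ⁻¹) A_[t] v_[t] d_{γ⁻¹}`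
(for `0 ≤ s < p`, all `i`). -/
theorem digit_conditions_equiv (d r p : ℕ)
    (G : Finset (Matrix (Fin d) (Fin d) ℝ)) (Λ : Set (Fin d → ℝ))
    (hcr : IsSplittingCrystal d G Λ)
    (A : Matrix (Fin d) (Fin d) ℝ) (hA : IsAdmissible G Λ A)
    (m : ℕ) (hm : (m : ℝ) = |A.det|)
    (γdig : Fin m → CrystElem d) (hdig : ∀ i, γdig i ∈ crystSet G Λ)
    (hcoset : ∀ σ ∈ crystSet G Λ, ∃! i : Fin m,
      σ ∈ {τ | ∃ γ ∈ crystSet G Λ, τ = crystMul (γdig i) (crystConj A γ)})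
    (Q : (s : ℕ) → (t : ℕ) → (Fin d → ℝ) → Matrix (Sym (Fin d) s) (Sym (Fin d) t) ℂ)
    (hQ : IsQfam d Q)
    (Bm : Matrix (Fin d) (Fin d) ℝ → (t : ℕ) → Matrix (Sym (Fin d) t) (Sym (Fin d) t) ℂ)
    (hBm : ∀ b ∈ G, ∀ t, IsMonMat d t b (Bm b t))
    (Am : (t : ℕ) → Matrix (Sym (Fin d) t) (Sym (Fin d) t) ℂ)
    (hAm : ∀ t, IsMonMat d t A (Am t))
    (D : CrystElem d → Matrix (Fin r) (Fin r) ℂ)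
    (hDfin : {γ | D γ ≠ 0}.Finite) (hDsupp : ∀ γ, D γ ≠ 0 → γ ∈ crystSet G Λ)
    (v : (Fin d → ℕ) → Fin r → ℂ) (hv0 : v 0 ≠ 0) :
    (∀ s < p, ∀ i : Fin m,
        yMat d r Q Bm v s (γdig i) =
          Am s * ∑ᶠ γ ∈ crystSet G Λ,
            yMat d r Q Bm v s γ * D (crystMul (crystConj A γ) (crystInv (γdig i)))) ↔
      (∀ s < p, ∀ i : Fin m,
        vmat d r v s =
          ∑ᶠ γ ∈ {τ | ∃ γ₀ ∈ crystSet G Λ, τ = crystMul (γdig i) (crystConj A γ₀)},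
            ∑ t ∈ Finset.range (s + 1),
              (Q s t (crystInv γ).2 * (Bm (crystInv γ).1 t)⁻¹) *
                (Am t * vmat d r v t * D (crystInv γ))) := by
  classical
  have hAu := detA_unit hA
  constructor
  · intro h1 s hs i
    have hσ := hdig i
    rw [hR_lemma hcr hA hQ hBm hAm D hDfin v hσ s]
    have hJ := Jv hcr hQ hBm r v hσ.1 s
    rw [← hJ]
    refine Finset.sum_congr rfl fun u hu => ?_
    rw [h1 u (lt_of_le_of_lt (Nat.lt_succ_iff.mp (Finset.mem_range.mp hu)) hs) i]
  · intro h2 s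
    induction s using Nat.strong_induction_on with
    | _ s IH =>
      intro hs i
      have hσ := hdig i
      have hσu := unit_of_memG hcr hσ.1
      have h2' := h2 s hs i
      rw [hR_lemma hcr hA hQ hBm hAm D hDfin v hσ s] at h2'
      have hJ := Jv hcr hQ hBm r v hσ.1 s
      have hEq : (∑ u ∈ Finset.range (s + 1), Pmat Q Bm s u (crystInv (γdig i)) *
            (Am u * ∑ᶠ γ ∈ crystSet G Λ, yMat d r Q Bm v u γ *
              D (crystMul (crystConj A γ) (crystInv (γdig i)))))
          = ∑ u ∈ Finset.range (s + 1), Pmat Q Bm s u (crystInv (γdig i)) *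
              yMat d r Q Bm v u (γdig i) := by
        rw [← h2', hJ]
      rw [Finset.sum_range_succ, Finset.sum_range_succ] at hEq
      have hIH : ∑ u ∈ Finset.range s, Pmat Q Bm s u (crystInv (γdig i)) *
            (Am u * ∑ᶠ γ ∈ crystSet G Λ, yMat d r Q Bm v u γ *
              D (crystMul (crystConj A γ) (crystInv (γdig i))))
          = ∑ u ∈ Finset.range s, Pmat Q Bm s u (crystInv (γdig i)) *
              yMat d r Q Bm v u (γdig i) := by
        refine Finset.sum_congr rfl fun u hu => ?_
        have hus : u < s := Finset.mem_range.mp hu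
        rw [← IH u hus (lt_trans hus hs) i]
      rw [hIH] at hEq
      have htop := add_left_cancel hEq
      have hinvmem := crystInv_mem hcr hσ
      have hPP := Pss_inv hcr hQ hBm (σ := crystInv (γdig i)) hinvmem.1 s
      rw [crystInv_crystInv _ hσu] at hPP
      calc yMat d r Q Bm v s (γdig i)
          = (Pmat Q Bm s s (γdig i) * Pmat Q Bm s s (crystInv (γdig i))) *
              yMat d r Q Bm v s (γdig i) := by rw [hPP, Matrix.one_mul]
        _ = Pmat Q Bm s s (γdig i) * (Pmat Q Bm s s (crystInv (γdig i)) *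
              yMat d r Q Bm v s (γdig i)) := Matrix.mul_assoc _ _ _
        _ = Pmat Q Bm s s (γdig i) * (Pmat Q Bm s s (crystInv (γdig i)) *
              (Am s * ∑ᶠ γ ∈ crystSet G Λ, yMat d r Q Bm v s γ *
                D (crystMul (crystConj A γ) (crystInv (γdig i))))) := by rw [htop]
        _ = (Pmat Q Bm s s (γdig i) * Pmat Q Bm s s (crystInv (γdig i))) *
              (Am s * ∑ᶠ γ ∈ crystSet G Λ, yMat d r Q Bm v s γ *
                D (crystMul (crystConj A γ) (crystInv (γdig i)))) :=
            (Matrix.mul_assoc _ _ _).symm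
        _ = Am s * ∑ᶠ γ ∈ crystSet G Λ, yMat d r Q Bm v s γ *
              D (crystMul (crystConj A γ) (crystInv (γdig i))) := by
            rw [hPP, Matrix.one_mul]
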